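/- Let 𝒫 be a nonempty set of probability measures on (Ω,F) under which the adapted process S is a martingale. Suppose {W^n = (H^n·S)_T − K^n} is a sequence with H^n predictable, K^n ≥ 0 𝒫-q.s., each W^n is P-integrable for all P ∈ 𝒫, and sup_n E_P[|W^n|] < ∞ for every P ∈ 𝒫. Then for every P ∈ 𝒫 and every t ∈ {1,...,T}, sup_n E_P[|H^n_t ΔS_t|] < ∞. -/

import Mathlib

open MeasureTheory Filter Finset

lemma ofReal_max_zero' (a : ℝ) : ENNReal.ofReal (max a 0) = ENNReal.ofReal a := by
  rcases le_total a 0 with h | h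
  · rw [max_eq_right h, ENNReal.ofReal_zero, ENNReal.ofReal_of_nonpos h]
  · rw [max_eq_left h]

lemma max_zero_decomp' (a : ℝ) : max a 0 = a + max (-a) 0 := by
  rcases le_total a 0 with h | h
  · rw [max_eq_right h, max_eq_left (neg_nonneg.mpr h)]; ring
  · rw [max_eq_left h, max_eq_right (neg_nonpos.mpr h)]; ring

lemma self_decomp' (a : ℝ) : a = max a 0 - max (-a) 0 := by
  rcases le_total a 0 with h | h
  · rw [max_eq_right h, max_eq_left (neg_nonneg.mpr h)]; ring
  · rw [max_eq_left h, max_eq_right (neg_nonpos.mpr h)]; ring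

lemma abs_decomp' (a : ℝ) : |a| = a + 2 * max (-a) 0 := by
  rcases le_total a 0 with h | h
  · rw [abs_of_nonpos h, max_eq_left (neg_nonneg.mpr h)]; ring
  · rw [abs_of_nonneg h, max_eq_right (neg_nonpos.mpr h)]; ring

/-- A nonnegative a.e. strongly measurable function with finite `ofReal`-lintegral is
integrable. -/
lemma integrable_of_lintegral_ofReal_lt_top' {Ω : Type*} {mΩ : MeasurableSpace Ω}
    {P : Measure Ω} {f : Ω → ℝ} (hf : AEStronglyMeasurable f P) (hnn : 0 ≤ᵐ[P] f)
    (hfin : ∫⁻ ω, ENNReal.ofReal (f ω) ∂P ≠ ⊤) : Integrable f P := by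
  refine ⟨hf, ?_⟩
  rw [hasFiniteIntegral_iff_norm]
  have : ∫⁻ ω, ENNReal.ofReal ‖f ω‖ ∂P = ∫⁻ ω, ENNReal.ofReal (f ω) ∂P := by
    refine lintegral_congr_ae ?_
    filter_upwards [hnn] with ω hω
    rw [Real.norm_eq_abs, abs_of_nonneg hω]
  rw [this]
  exact hfin.lt_top

/-- Descent step: if `G`, `Y` are `m`-measurable and `D` is an integrable increment with
vanishing conditional expectation, then the expected negative part of `G` is bounded by the
expected negative part of `G + Y * D`. -/
lemma descent_lemma {Ω : Type*} {mΩ m : MeasurableSpace Ω} (hm : m ≤ mΩ)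
    (P : @Measure Ω mΩ) [IsProbabilityMeasure P]
    {G Y D : Ω → ℝ} (hG : StronglyMeasurable[m] G) (hY : StronglyMeasurable[m] Y)
    (hD : Integrable D P) (hDc : P[D|m] =ᵐ[P] 0) :
    ∫⁻ ω, ENNReal.ofReal (-(G ω)) ∂P ≤ ∫⁻ ω, ENNReal.ofReal (-(G ω + Y ω * D ω)) ∂P := by
  set B : ℕ → Set Ω := fun k => {ω | |Y ω| ≤ (k : ℝ)} ∩ {ω | |G ω| ≤ (k : ℝ)} with hBdef
  have hBm : ∀ k, MeasurableSet[m] (B k) := fun k =>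
    (measurableSet_le hY.measurable.abs measurable_const).inter
      (measurableSet_le hG.measurable.abs measurable_const)
  have hBmono : ∀ ⦃k l⦄, k ≤ l → B k ⊆ B l := by
    intro k l hkl ω hω
    simp only [hBdef, Set.mem_inter_iff, Set.mem_setOf_eq] at hω ⊢
    exact ⟨hω.1.trans (Nat.cast_le.mpr hkl), hω.2.trans (Nat.cast_le.mpr hkl)⟩
  -- key bound for each k
  have hkey : ∀ k, ∫⁻ ω, ENNReal.ofReal (-((B k).indicator G ω)) ∂P
      ≤ ∫⁻ ω, ENNReal.ofReal (-(G ω + Y ω * D ω)) ∂P := by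
    intro k
    set Gk : Ω → ℝ := (B k).indicator G with hGkdef
    set Yk : Ω → ℝ := (B k).indicator Y with hYkdef
    have hGk_sm : StronglyMeasurable[m] Gk := hG.indicator (hBm k)
    have hYk_sm : StronglyMeasurable[m] Yk := hY.indicator (hBm k)
    have hGk_bdd : ∀ ω, ‖Gk ω‖ ≤ (k : ℝ) := by
      intro ω
      rw [Real.norm_eq_abs]
      by_cases hω : ω ∈ B k
      · rw [hGkdef, Set.indicator_of_mem hω]; exact hω.2
      · rw [hGkdef, Set.indicator_of_notMem hω]; simp
    have hYk_bdd : ∀ ω, |Yk ω| ≤ (k : ℝ) := by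
      intro ω
      by_cases hω : ω ∈ B k
      · rw [hYkdef, Set.indicator_of_mem hω]; exact hω.1
      · rw [hYkdef, Set.indicator_of_notMem hω]; simp
    have hGk_aesm : AEStronglyMeasurable[mΩ] Gk P := (hGk_sm.mono hm).aestronglyMeasurable
    have hYk_aesm : AEStronglyMeasurable[mΩ] Yk P := (hYk_sm.mono hm).aestronglyMeasurable
    have hGk_int : Integrable Gk P :=
      Integrable.mono' (integrable_const (k : ℝ)) hGk_aesm (ae_of_all _ hGk_bdd)
    have hYkD_int : Integrable (Yk * D) P := by
      refine Integrable.mono' (hD.abs.const_mul (k : ℝ))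
        (hYk_aesm.mul hD.aestronglyMeasurable) (ae_of_all _ ?_)
      intro ω
      rw [Pi.mul_apply, Real.norm_eq_abs, abs_mul]
      exact mul_le_mul_of_nonneg_right (hYk_bdd ω) (abs_nonneg _)
    set Zk : Ω → ℝ := Gk + Yk * D with hZkdef
    have hZk_int : Integrable Zk P := hGk_int.add hYkD_int
    -- conditional expectation of Zk
    have hce : P[Zk|m] =ᵐ[P] Gk := by
      have ha := condExp_add (μ := P) (m := m) hGk_int hYkD_int
      have hb : P[Gk|m] = Gk := condExp_of_stronglyMeasurable hm hGk_sm hGk_int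
      have hc := condExp_mul_of_stronglyMeasurable_left hYk_sm hYkD_int hD
      filter_upwards [ha, hc, hDc] with ω hω1 hω2 hω3
      show (P[Gk + Yk * D|m]) ω = Gk ω
      rw [hω1, Pi.add_apply, hb, hω2, Pi.mul_apply, hω3]
      simp
    -- negative part of Zk
    set N : Ω → ℝ := fun ω => max (-(Zk ω)) 0 with hNdef
    have hN_int : Integrable N P := hZk_int.neg.pos_part
    have hN_nonneg : 0 ≤ᵐ[P] N := ae_of_all _ fun ω => le_max_right _ _
    have h3 : ∀ᵐ ω ∂P, -((P[Zk|m]) ω) ≤ (P[N|m]) ω := by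
      have hmono := condExp_mono (μ := P) (m := m) hZk_int.neg hN_int
        (ae_of_all _ fun ω => le_max_left (-(Zk ω)) 0)
      have hneg := condExp_neg (μ := P) (m := m) Zk
      filter_upwards [hmono, hneg] with ω hω1 hω2
      rw [← Pi.neg_apply, ← hω2]
      exact hω1
    have h4 : 0 ≤ᵐ[P] P[N|m] := condExp_nonneg hN_nonneg
    calc ∫⁻ ω, ENNReal.ofReal (-(Gk ω)) ∂P
        = ∫⁻ ω, ENNReal.ofReal (-((P[Zk|m]) ω)) ∂P := by
          refine lintegral_congr_ae ?_
          filter_upwards [hce] with ω hω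
          rw [hω]
      _ ≤ ∫⁻ ω, ENNReal.ofReal ((P[N|m]) ω) ∂P := by
          refine lintegral_mono_ae ?_
          filter_upwards [h3] with ω hω
          exact ENNReal.ofReal_le_ofReal hω
      _ = ENNReal.ofReal (∫ ω, (P[N|m]) ω ∂P) :=
          (ofReal_integral_eq_lintegral_ofReal integrable_condExp h4).symm
      _ = ENNReal.ofReal (∫ ω, N ω ∂P) := by rw [integral_condExp hm]
      _ = ∫⁻ ω, ENNReal.ofReal (N ω) ∂P :=
          ofReal_integral_eq_lintegral_ofReal hN_int hN_nonneg
      _ = ∫⁻ ω, ENNReal.ofReal (-(Zk ω)) ∂P := by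
          refine lintegral_congr fun ω => ?_
          rw [hNdef]
          exact ofReal_max_zero' _
      _ ≤ ∫⁻ ω, ENNReal.ofReal (-(G ω + Y ω * D ω)) ∂P := by
          refine lintegral_mono fun ω => ?_
          by_cases hω : ω ∈ B k
          · rw [hZkdef, Pi.add_apply, Pi.mul_apply, hGkdef, hYkdef,
              Set.indicator_of_mem hω, Set.indicator_of_mem hω]
          · rw [hZkdef, Pi.add_apply, Pi.mul_apply, hGkdef, hYkdef,
              Set.indicator_of_notMem hω, Set.indicator_of_notMem hω]
            simp
  -- monotone convergence in k
  have hsup : ∫⁻ ω, ENNReal.ofReal (-(G ω)) ∂P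
      = ⨆ k, ∫⁻ ω, ENNReal.ofReal (-((B k).indicator G ω)) ∂P := by
    rw [← lintegral_iSup]
    · refine lintegral_congr fun ω => ?_
      obtain ⟨k, hk⟩ := exists_nat_ge (max |Y ω| |G ω|)
      have hωB : ω ∈ B k := ⟨(le_max_left _ _).trans hk, (le_max_right _ _).trans hk⟩
      refine le_antisymm ?_ (iSup_le fun j => ?_)
      · refine le_iSup_of_le k ?_
        rw [Set.indicator_of_mem hωB]
      · by_cases hω : ω ∈ B j
        · rw [Set.indicator_of_mem hω]
        · rw [Set.indicator_of_notMem hω]; simp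
    · intro k
      exact ((hG.measurable.mono hm le_rfl).indicator (hm _ (hBm k))).neg.ennreal_ofReal
    · intro k l hkl ω
      dsimp only
      by_cases hω : ω ∈ B k
      · rw [Set.indicator_of_mem hω, Set.indicator_of_mem (hBmono hkl hω)]
      · rw [Set.indicator_of_notMem hω]; simp
  rw [hsup]
  exact iSup_le hkey

/-- Ascent step: if `G` is integrable, `Y` is `m`-measurable, `D` is integrable with vanishing
conditional expectation, and the negative part of `G + Y * D` has finite expectation, then
`G + Y * D` is integrable with the same integral as `G`. -/
lemma ascent_lemma {Ω : Type*} {mΩ m : MeasurableSpace Ω} (hm : m ≤ mΩ)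
    (P : @Measure Ω mΩ) [IsProbabilityMeasure P]
    {G Y D : Ω → ℝ} (hGi : Integrable G P) (hY : StronglyMeasurable[m] Y)
    (hD : Integrable D P) (hDc : P[D|m] =ᵐ[P] 0)
    (hneg : ∫⁻ ω, ENNReal.ofReal (-(G ω + Y ω * D ω)) ∂P ≠ ⊤) :
    Integrable (fun ω => G ω + Y ω * D ω) P ∧
      (∫ ω, (G ω + Y ω * D ω) ∂P) = ∫ ω, G ω ∂P := by
  set F : Ω → ℝ := fun ω => G ω + Y ω * D ω with hFdef
  have hY_aesm : AEStronglyMeasurable[mΩ] Y P := (hY.mono hm).aestronglyMeasurable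
  have hF_aesm : AEStronglyMeasurable[mΩ] F P :=
    hGi.aestronglyMeasurable.add (hY_aesm.mul hD.aestronglyMeasurable)
  -- negative part of F is integrable
  set N : Ω → ℝ := fun ω => max (-(F ω)) 0 with hNdef
  have hN_aesm : AEStronglyMeasurable[mΩ] N P := hF_aesm.neg.sup aestronglyMeasurable_const
  have hN_nonneg : 0 ≤ᵐ[P] N := ae_of_all _ fun ω => le_max_right _ _
  have hN_lint : ∫⁻ ω, ENNReal.ofReal (N ω) ∂P = ∫⁻ ω, ENNReal.ofReal (-(F ω)) ∂P :=
    lintegral_congr fun ω => ofReal_max_zero' _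
  have hN_int : Integrable N P :=
    integrable_of_lintegral_ofReal_lt_top' hN_aesm hN_nonneg (by rw [hN_lint]; exact hneg)
  -- truncations
  set A : ℕ → Set Ω := fun k => {ω | |Y ω| ≤ (k : ℝ)} with hAdef
  have hAm : ∀ k, MeasurableSet[m] (A k) := fun k =>
    measurableSet_le hY.measurable.abs measurable_const
  set Yk : ℕ → Ω → ℝ := fun k => (A k).indicator Y with hYkdef
  have hYk_sm : ∀ k, StronglyMeasurable[m] (Yk k) := fun k => hY.indicator (hAm k)
  have hYk_bdd : ∀ k ω, |Yk k ω| ≤ (k : ℝ) := by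
    intro k ω
    by_cases hω : ω ∈ A k
    · rw [hYkdef]; simp only []; rw [Set.indicator_of_mem hω]; exact hω
    · rw [hYkdef]; simp only []; rw [Set.indicator_of_notMem hω]; simp
  have hYkD_int : ∀ k, Integrable (fun ω => Yk k ω * D ω) P := by
    intro k
    refine Integrable.mono' (hD.abs.const_mul (k : ℝ))
      ((((hYk_sm k).mono hm).aestronglyMeasurable).mul hD.aestronglyMeasurable)
      (ae_of_all _ fun ω => ?_)
    rw [Real.norm_eq_abs, abs_mul]
    exact mul_le_mul_of_nonneg_right (hYk_bdd k ω) (abs_nonneg _)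
  set Z : ℕ → Ω → ℝ := fun k ω => G ω + Yk k ω * D ω with hZdef
  have hZ_int : ∀ k, Integrable (Z k) P := fun k => hGi.add (hYkD_int k)
  -- ∫ Z k = ∫ G
  have hZ_eq : ∀ k, (∫ ω, Z k ω ∂P) = ∫ ω, G ω ∂P := by
    intro k
    have h0 : (∫ ω, Yk k ω * D ω ∂P) = 0 := by
      have h1 : (∫ ω, (P[fun ω => Yk k ω * D ω|m]) ω ∂P) = ∫ ω, Yk k ω * D ω ∂P :=
        integral_condExp hm
      have h2 : P[fun ω => Yk k ω * D ω|m] =ᵐ[P] 0 := by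
        have hc := condExp_mul_of_stronglyMeasurable_left (hYk_sm k) (hYkD_int k) hD
        filter_upwards [hc, hDc] with ω hω1 hω2
        show (P[Yk k * D|m]) ω = 0
        rw [hω1, Pi.mul_apply, hω2]
        simp
      rw [← h1, integral_congr_ae h2]; simp
    rw [hZdef]
    simp only []
    rw [integral_add hGi (hYkD_int k), h0, add_zero]
  -- pointwise convergence Z k → F and relations on A k
  have hZF : ∀ k ω, ω ∈ A k → Z k ω = F ω := by
    intro k ω hω
    rw [hZdef, hFdef]
    simp only []
    rw [hYkdef]
    simp only []
    rw [Set.indicator_of_mem hω]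
  have hZG : ∀ k ω, ω ∉ A k → Z k ω = G ω := by
    intro k ω hω
    rw [hZdef]
    simp only []
    rw [hYkdef]
    simp only []
    rw [Set.indicator_of_notMem hω]
    ring
  have htend : ∀ ω, ∀ᶠ k in atTop, Z k ω = F ω := by
    intro ω
    obtain ⟨k₀, hk₀⟩ := exists_nat_ge |Y ω|
    filter_upwards [eventually_ge_atTop k₀] with k hk
    exact hZF k ω (hk₀.trans (Nat.cast_le.mpr hk))
  -- positive part bound via Fatou
  set Pk : ℕ → Ω → ℝ := fun k ω => max (Z k ω) 0 with hPkdef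
  have hPk_int : ∀ k, Integrable (Pk k) P := fun k => (hZ_int k).pos_part
  set Nk : ℕ → Ω → ℝ := fun k ω => max (-(Z k ω)) 0 with hNkdef
  have hNk_int : ∀ k, Integrable (Nk k) P := fun k => (hZ_int k).neg.pos_part
  set Gneg : Ω → ℝ := fun ω => max (-(G ω)) 0 with hGnegdef
  have hGneg_int : Integrable Gneg P := hGi.neg.pos_part
  have hNk_le : ∀ k ω, Nk k ω ≤ N ω + Gneg ω := by
    intro k ω
    by_cases hω : ω ∈ A k
    · rw [hNkdef]; simp only []; rw [hZF k ω hω]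
      exact le_add_of_le_of_nonneg le_rfl (le_max_right _ _)
    · rw [hNkdef]; simp only []; rw [hZG k ω hω]
      exact le_add_of_nonneg_left (le_max_right _ _)
  set c : ℝ := (∫ ω, G ω ∂P) + ((∫ ω, N ω ∂P) + ∫ ω, Gneg ω ∂P) with hcdef
  have hPk_bound : ∀ k, (∫ ω, Pk k ω ∂P) ≤ c := by
    intro k
    have h1 : (∫ ω, Pk k ω ∂P) = (∫ ω, Z k ω ∂P) + ∫ ω, Nk k ω ∂P := by
      rw [← integral_add (hZ_int k) (hNk_int k)]
      refine integral_congr_ae (ae_of_all _ fun ω => ?_)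
      exact max_zero_decomp' _
    have h2 : (∫ ω, Nk k ω ∂P) ≤ ∫ ω, (N ω + Gneg ω) ∂P :=
      integral_mono (hNk_int k) (hN_int.add hGneg_int) (fun ω => hNk_le k ω)
    rw [integral_add hN_int hGneg_int] at h2
    rw [h1, hZ_eq k, hcdef]
    exact add_le_add_right h2 _
  -- Fatou
  set Fp : Ω → ℝ := fun ω => max (F ω) 0 with hFpdef
  have hFp_aesm : AEStronglyMeasurable[mΩ] Fp P := hF_aesm.sup aestronglyMeasurable_const
  have hFp_lint : ∫⁻ ω, ENNReal.ofReal (Fp ω) ∂P ≤ ENNReal.ofReal c := by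
    have hmeas : ∀ k, AEMeasurable (fun ω => ENNReal.ofReal (Pk k ω)) P := by
      intro k
      exact ((hPk_int k).aestronglyMeasurable.aemeasurable).ennreal_ofReal
    have hlim : ∀ ω, Tendsto (fun k => ENNReal.ofReal (Pk k ω)) atTop
        (nhds (ENNReal.ofReal (Fp ω))) := by
      intro ω
      refine tendsto_nhds_of_eventually_eq ?_
      filter_upwards [htend ω] with k hk
      rw [hPkdef, hFpdef]
      simp only []
      rw [hk]
    have key := lintegral_liminf_le' (μ := P) (u := atTop) hmeas
    have heq : ∫⁻ ω, ENNReal.ofReal (Fp ω) ∂P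
        = ∫⁻ ω, liminf (fun k => ENNReal.ofReal (Pk k ω)) atTop ∂P := by
      refine lintegral_congr fun ω => ?_
      exact ((hlim ω).liminf_eq).symm
    rw [heq]
    refine key.trans ?_
    have hub : ∀ k, ∫⁻ ω, ENNReal.ofReal (Pk k ω) ∂P ≤ ENNReal.ofReal c := by
      intro k
      rw [← ofReal_integral_eq_lintegral_ofReal (hPk_int k)
        (ae_of_all _ fun ω => le_max_right _ _)]
      exact ENNReal.ofReal_le_ofReal (hPk_bound k)
    calc liminf (fun k => ∫⁻ ω, ENNReal.ofReal (Pk k ω) ∂P) atTop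
        ≤ liminf (fun _ : ℕ => ENNReal.ofReal c) atTop :=
          liminf_le_liminf (Eventually.of_forall hub)
      _ = ENNReal.ofReal c := liminf_const _
  have hFp_int : Integrable Fp P :=
    integrable_of_lintegral_ofReal_lt_top' hFp_aesm (ae_of_all _ fun ω => le_max_right _ _)
      (by exact ne_top_of_le_ne_top ENNReal.ofReal_ne_top hFp_lint)
  have hF_int : Integrable F P := by
    have : Integrable (fun ω => Fp ω - N ω) P := hFp_int.sub hN_int
    refine this.congr (ae_of_all _ fun ω => ?_)
    exact (self_decomp' (F ω)).symm
  -- dominated convergence for the integral identity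
  have hint_eq : (∫ ω, F ω ∂P) = ∫ ω, G ω ∂P := by
    have hbound_int : Integrable (fun ω => |G ω| + |F ω|) P := hGi.abs.add hF_int.abs
    have hdom : Tendsto (fun k => ∫ ω, Z k ω ∂P) atTop (nhds (∫ ω, F ω ∂P)) := by
      refine tendsto_integral_of_dominated_convergence (fun ω => |G ω| + |F ω|)
        (fun k => (hZ_int k).aestronglyMeasurable) hbound_int
        (fun k => ae_of_all _ fun ω => ?_) (ae_of_all _ fun ω => ?_)
      · rw [Real.norm_eq_abs]
        by_cases hω : ω ∈ A k
        · rw [hZF k ω hω]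
          exact le_add_of_nonneg_of_le (abs_nonneg _) le_rfl
        · rw [hZG k ω hω]
          exact le_add_of_le_of_nonneg le_rfl (abs_nonneg _)
      · exact tendsto_nhds_of_eventually_eq (htend ω)
    have hconst : Tendsto (fun k => ∫ ω, Z k ω ∂P) atTop (nhds (∫ ω, G ω ∂P)) := by
      have : (fun k => ∫ ω, Z k ω ∂P) = fun _ => ∫ ω, G ω ∂P := funext hZ_eq
      rw [this]
      exact tendsto_const_nhds
    exact tendsto_nhds_unique hdom hconst
  exact ⟨hF_int, hint_eq⟩

/-- If `W^n = (H^n·S)_T − K^n` with `H^n` predictable and `K^n ≥ 0` 𝔓-q.s., each `W^n`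
integrable with `sup_n E_P[|W^n|] < ∞` for every martingale measure `P ∈ 𝔓`, then for
every `P ∈ 𝔓` and `t ∈ {1,…,T}` the sequence `{H^n_t ΔS_t}` is bounded in `L¹(P)`. -/
theorem stmt3 {Ω : Type*} {mΩ : MeasurableSpace Ω} (ℱ : Filtration ℕ mΩ) (T : ℕ)
    (𝔓 : Set (Measure Ω)) (h𝔓 : 𝔓.Nonempty)
    (S : ℕ → Ω → ℝ)
    (hmart : ∀ P ∈ 𝔓, IsProbabilityMeasure P ∧ Martingale S ℱ P)
    (H : ℕ → ℕ → Ω → ℝ) (K W : ℕ → Ω → ℝ)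
    (hH : ∀ n, ∀ t : ℕ, 1 ≤ t → StronglyMeasurable[ℱ (t - 1)] (H n t))
    (hK : ∀ n, ∀ P ∈ 𝔓, ∀ᵐ ω ∂P, 0 ≤ K n ω)
    (hW : ∀ n ω, W n ω = (∑ u ∈ Finset.Icc 1 T, H n u ω * (S u ω - S (u - 1) ω)) - K n ω)
    (hWint : ∀ n, ∀ P ∈ 𝔓, Integrable (W n) P)
    (hWbdd : ∀ P ∈ 𝔓, ∃ C : ℝ, ∀ n, ∫ ω, |W n ω| ∂P ≤ C) :
    ∀ P ∈ 𝔓, ∀ t : ℕ, 1 ≤ t → t ≤ T →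
      ∃ C : ℝ, ∀ n, ∫ ω, |H n t ω * (S t ω - S (t - 1) ω)| ∂P ≤ C := by
  intro P hP t ht1 htT
  obtain ⟨hprob, hmartP⟩ := hmart P hP
  haveI := hprob
  obtain ⟨C, hC⟩ := hWbdd P hP
  set C0 : ℝ := max C 0 with hC0def
  have hC0nn : 0 ≤ C0 := le_max_right _ _
  refine ⟨4 * C0, fun n => ?_⟩
  -- the partial sums of the stochastic integral
  set M : ℕ → Ω → ℝ := fun s ω => ∑ u ∈ Finset.Icc 1 s, H n u ω * (S u ω - S (u - 1) ω)
    with hMdef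
  -- basic measurability and integrability facts
  have hHsm : ∀ s : ℕ, StronglyMeasurable[ℱ s] (H n (s + 1)) := fun s => by
    simpa using hH n (s + 1) (Nat.succ_le_succ (Nat.zero_le s))
  have hMsm : ∀ s, StronglyMeasurable[ℱ s] (M s) := by
    intro s
    rw [hMdef]
    apply Finset.stronglyMeasurable_fun_sum
    intro u hu
    rw [Finset.mem_Icc] at hu
    have h1 : StronglyMeasurable[ℱ (u - 1)] (H n u) := hH n u hu.1
    have h2 : StronglyMeasurable[ℱ u] (S u) := hmartP.stronglyAdapted u
    have h3 : StronglyMeasurable[ℱ (u - 1)] (S (u - 1)) := hmartP.stronglyAdapted (u - 1)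
    exact ((h1.mono (ℱ.mono ((Nat.sub_le u 1).trans hu.2)))).mul
      (((h2.mono (ℱ.mono hu.2))).sub
        ((h3.mono (ℱ.mono ((Nat.sub_le u 1).trans hu.2)))))
  have hD_int : ∀ s : ℕ, Integrable (S (s + 1) - S s) P := fun s =>
    (hmartP.integrable (s + 1)).sub (hmartP.integrable s)
  have hDc : ∀ s : ℕ, P[S (s + 1) - S s|ℱ s] =ᵐ[P] 0 := by
    intro s
    have h1 : P[S (s + 1) - S s|ℱ s] =ᵐ[P] P[S (s + 1)|ℱ s] - P[S s|ℱ s] :=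
      condExp_sub (hmartP.integrable (s + 1)) (hmartP.integrable s) _
    have h2 : P[S (s + 1)|ℱ s] =ᵐ[P] S s := hmartP.condExp_ae_eq (Nat.le_succ s)
    have h3 : P[S s|ℱ s] = S s :=
      condExp_of_stronglyMeasurable (ℱ.le s) (hmartP.stronglyAdapted s) (hmartP.integrable s)
    filter_upwards [h1, h2] with ω hω1 hω2
    rw [hω1, Pi.sub_apply, hω2, h3]
    simp
  have hstep : ∀ s ω, M (s + 1) ω = M s ω + H n (s + 1) ω * (S (s + 1) ω - S s ω) := by
    intro s ω
    rw [hMdef]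
    simp only []
    rw [Finset.sum_Icc_succ_top (Nat.succ_le_succ (Nat.zero_le s))]
    simp
  -- descent: the negative parts have decreasing expectations backwards in time
  have hdescent : ∀ s, ∫⁻ ω, ENNReal.ofReal (-(M s ω)) ∂P
      ≤ ∫⁻ ω, ENNReal.ofReal (-(M (s + 1) ω)) ∂P := by
    intro s
    have key := descent_lemma (ℱ.le s) P (hMsm s) (hHsm s) (hD_int s) (hDc s)
    refine key.trans (le_of_eq (lintegral_congr fun ω => ?_))
    rw [hstep s ω]
    simp [Pi.sub_apply]
  have hchain : ∀ s r, s ≤ r → ∫⁻ ω, ENNReal.ofReal (-(M s ω)) ∂P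
      ≤ ∫⁻ ω, ENNReal.ofReal (-(M r ω)) ∂P := by
    intro s r hsr
    induction r, hsr using Nat.le_induction with
    | base => exact le_rfl
    | succ r _ ih => exact ih.trans (hdescent r)
  -- the terminal negative part is controlled by E|W n|
  have htop : ∫⁻ ω, ENNReal.ofReal (-(M T ω)) ∂P ≤ ENNReal.ofReal C0 := by
    have hae : ∀ᵐ ω ∂P, ENNReal.ofReal (-(M T ω)) ≤ ENNReal.ofReal |W n ω| := by
      filter_upwards [hK n P hP] with ω hKω
      refine ENNReal.ofReal_le_ofReal ?_
      have hMT : M T ω = W n ω + K n ω := by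
        rw [hMdef]
        simp only []
        rw [hW n ω]
        ring
      rw [hMT]
      have := neg_abs_le (W n ω)
      linarith
    calc ∫⁻ ω, ENNReal.ofReal (-(M T ω)) ∂P
        ≤ ∫⁻ ω, ENNReal.ofReal |W n ω| ∂P := lintegral_mono_ae hae
      _ = ENNReal.ofReal (∫ ω, |W n ω| ∂P) :=
          (ofReal_integral_eq_lintegral_ofReal (hWint n P hP).abs
            (ae_of_all _ fun ω => abs_nonneg _)).symm
      _ ≤ ENNReal.ofReal C0 := ENNReal.ofReal_le_ofReal ((hC n).trans (le_max_left _ _))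
  have hbound : ∀ s, s ≤ T → ∫⁻ ω, ENNReal.ofReal (-(M s ω)) ∂P ≤ ENNReal.ofReal C0 :=
    fun s hs => (hchain s T hs).trans htop
  -- forward induction: M s is integrable with zero mean
  have hforward : ∀ s, s ≤ T → Integrable (M s) P ∧ (∫ ω, M s ω ∂P) = 0 := by
    intro s
    induction s with
    | zero =>
      intro _
      have hM0 : ∀ ω, M 0 ω = 0 := fun ω => by rw [hMdef]; simp
      constructor
      · exact (integrable_zero Ω ℝ P).congr (ae_of_all _ fun ω => (hM0 ω).symm)
      · have h0 : (∫ ω, M 0 ω ∂P) = ∫ _ω, (0 : ℝ) ∂P := integral_congr_ae (ae_of_all _ hM0)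
        rw [h0, integral_zero]
    | succ s ih =>
      intro hs
      obtain ⟨hint, hzero⟩ := ih (Nat.le_of_succ_le hs)
      have hne : ∫⁻ ω, ENNReal.ofReal (-(M s ω + H n (s + 1) ω * (S (s + 1) - S s) ω)) ∂P
          ≠ ⊤ := by
        have hle := hbound (s + 1) hs
        have heq : ∫⁻ ω, ENNReal.ofReal (-(M s ω + H n (s + 1) ω * (S (s + 1) - S s) ω)) ∂P
            = ∫⁻ ω, ENNReal.ofReal (-(M (s + 1) ω)) ∂P := by
          refine lintegral_congr fun ω => ?_
          rw [hstep s ω]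
          simp [Pi.sub_apply]
        rw [heq]
        exact ne_top_of_le_ne_top ENNReal.ofReal_ne_top hle
      obtain ⟨hint2, heq2⟩ := ascent_lemma (ℱ.le s) P hint (hHsm s) (hD_int s) (hDc s) hne
      constructor
      · refine hint2.congr (ae_of_all _ fun ω => ?_)
        rw [hstep s ω]
        simp [Pi.sub_apply]
      · have h0 : (∫ ω, M (s + 1) ω ∂P)
            = ∫ ω, (M s ω + H n (s + 1) ω * (S (s + 1) - S s) ω) ∂P := by
          refine integral_congr_ae (ae_of_all _ fun ω => ?_)
          rw [hstep s ω]
          simp [Pi.sub_apply]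
        rw [h0, heq2, hzero]
  -- L¹ bound on each M s
  have habs : ∀ s, s ≤ T → (∫ ω, |M s ω| ∂P) ≤ 2 * C0 := by
    intro s hs
    obtain ⟨hint, hzero⟩ := hforward s hs
    have hneg_int : Integrable (fun ω => max (-(M s ω)) 0) P := hint.neg.pos_part
    have hnegle : (∫ ω, max (-(M s ω)) 0 ∂P) ≤ C0 := by
      have h1 : ENNReal.ofReal (∫ ω, max (-(M s ω)) 0 ∂P)
          = ∫⁻ ω, ENNReal.ofReal (max (-(M s ω)) 0) ∂P :=
        ofReal_integral_eq_lintegral_ofReal hneg_int (ae_of_all _ fun ω => le_max_right _ _)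
      have h2 : (∫⁻ ω, ENNReal.ofReal (max (-(M s ω)) 0) ∂P)
          = ∫⁻ ω, ENNReal.ofReal (-(M s ω)) ∂P := lintegral_congr fun ω => ofReal_max_zero' _
      have h3 := hbound s hs
      rw [← h2, ← h1] at h3
      exact (ENNReal.ofReal_le_ofReal_iff hC0nn).mp h3
    have he : (∫ ω, |M s ω| ∂P) = ∫ ω, (M s ω + 2 * max (-(M s ω)) 0) ∂P :=
      integral_congr_ae (ae_of_all _ fun ω => abs_decomp' _)
    rw [he, integral_add hint (hneg_int.const_mul 2), hzero, integral_const_mul, zero_add]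
    linarith
  -- conclusion
  obtain ⟨hint_t, _⟩ := hforward t htT
  obtain ⟨hint_t1, _⟩ := hforward (t - 1) ((Nat.sub_le t 1).trans htT)
  have hXeq : ∀ ω, H n t ω * (S t ω - S (t - 1) ω) = M t ω - M (t - 1) ω := by
    intro ω
    obtain ⟨r, rfl⟩ : ∃ r, t = r + 1 := ⟨t - 1, (Nat.succ_pred_eq_of_pos ht1).symm⟩
    rw [hstep r ω]
    simp
  calc ∫ ω, |H n t ω * (S t ω - S (t - 1) ω)| ∂P
      = ∫ ω, |M t ω - M (t - 1) ω| ∂P :=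
        integral_congr_ae (ae_of_all _ fun ω => by dsimp only; rw [hXeq ω])
    _ ≤ ∫ ω, (|M t ω| + |M (t - 1) ω|) ∂P :=
        integral_mono ((hint_t.sub hint_t1).abs) (hint_t.abs.add hint_t1.abs)
          (fun ω => abs_sub _ _)
    _ = (∫ ω, |M t ω| ∂P) + ∫ ω, |M (t - 1) ω| ∂P := integral_add hint_t.abs hint_t1.abs
    _ ≤ 2 * C0 + 2 * C0 := add_le_add (habs t htT) (habs (t - 1) ((Nat.sub_le t 1).trans htT))
    _ = 4 * C0 := by ring
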